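/- With the notation of the zero-inflated truncated bivariate likelihood ℒ(σ,y) and the measure μ = δ₀⊗δ₀ + δ₀⊗λ + λ⊗δ₀ + λ⊗λ, for every σ ∈ [-1+δ, 1-δ] and every positive integer l ≤ 3, one has ∫_{ℝ²} ∂_σ^l ℒ(σ,y) dμ(y) = ∂_σ^l ∫_{ℝ²} ℒ(σ,y) dμ(y) = 0. -/

import Mathlib

open Real Set MeasureTheory

open ProbabilityTheory

/-- Bivariate standard Gaussian density with correlation `σ`. -/
noncomputable def bivGauss (σ x y : ℝ) : ℝ :=
  (1 / (2 * π * Real.sqrt (1 - σ ^ 2))) *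
    Real.exp (-(x ^ 2 - 2 * σ * x * y + y ^ 2) / (2 * (1 - σ ^ 2)))

/-- `φ₀₁(σ,y)`: first coordinate truncated away. -/
noncomputable def phi01 (a₁ b₁ σ y : ℝ) : ℝ :=
  ∫ x in (Icc a₁ b₁)ᶜ, bivGauss σ x y

/-- `φ₁₀(σ,x)`: second coordinate truncated away. -/
noncomputable def phi10 (a₂ b₂ σ x : ℝ) : ℝ :=
  ∫ y in (Icc a₂ b₂)ᶜ, bivGauss σ x y

/-- `φ₀₀(σ)`: both coordinates truncated away. -/
noncomputable def phi00 (a₁ b₁ a₂ b₂ σ : ℝ) : ℝ :=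
  ∫ x in (Icc a₁ b₁)ᶜ, ∫ y in (Icc a₂ b₂)ᶜ, bivGauss σ x y

/-- The measure `μ = δ₀⊗δ₀ + δ₀⊗λ + λ⊗δ₀ + λ⊗λ` on `ℝ²`. -/
noncomputable def muZI : Measure (ℝ × ℝ) :=
  (Measure.dirac (0 : ℝ)).prod (Measure.dirac (0 : ℝ)) +
  (Measure.dirac (0 : ℝ)).prod volume +
  volume.prod (Measure.dirac (0 : ℝ)) +
  volume.prod volume

/-- Zero-inflated truncated bivariate likelihood. -/
noncomputable def ZIL (a₁ b₁ a₂ b₂ σ : ℝ) (y : ℝ × ℝ) : ℝ :=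
  Set.indicator {y : ℝ × ℝ | y.1 = 0 ∧ y.2 = 0}
    (fun _ => phi00 a₁ b₁ a₂ b₂ σ) y
  + Set.indicator {y : ℝ × ℝ | y.1 = 0 ∧ (y.2 ∈ Icc a₂ b₂ ∧ y.2 ≠ 0)}
    (fun y => phi01 a₁ b₁ σ y.2) y
  + Set.indicator {y : ℝ × ℝ | (y.1 ∈ Icc a₁ b₁ ∧ y.1 ≠ 0) ∧ y.2 = 0}
    (fun y => phi10 a₂ b₂ σ y.1) y
  + Set.indicator {y : ℝ × ℝ | (y.1 ∈ Icc a₁ b₁ ∧ y.1 ≠ 0) ∧ (y.2 ∈ Icc a₂ b₂ ∧ y.2 ≠ 0)}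
    (fun y => bivGauss σ y.1 y.2) y

lemma one_sub_sq_pos {s : ℝ} (hs : s ∈ Ioo (-1:ℝ) 1) : 0 < 1 - s ^ 2 := by
  nlinarith [hs.1, hs.2]

lemma bivGauss_factor {s : ℝ} (hs : s ∈ Ioo (-1:ℝ) 1) (x y : ℝ) :
    bivGauss s x y =
      gaussianPDFReal 0 1 x *
        gaussianPDFReal (s*x) ⟨1 - s^2, (one_sub_sq_pos hs).le⟩ y := by
  have h1 : (0:ℝ) < 1 - s ^ 2 := one_sub_sq_pos hs
  have h2π : (0:ℝ) < 2 * π := by positivity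
  unfold bivGauss gaussianPDFReal
  push_cast
  change 1 / (2 * π * √(1 - s ^ 2)) * rexp (-(x ^ 2 - 2 * s * x * y + y ^ 2) / (2 * (1 - s ^ 2))) = (√(2 * π * 1))⁻¹ * rexp (-(x - 0) ^ 2 / (2 * 1)) * ((√(2 * π * (1 - s ^ 2)))⁻¹ * rexp (-(y - s * x) ^ 2 / (2 * (1 - s ^ 2))))
  have hs1 : Real.sqrt (2 * π * (1 - s ^ 2)) = Real.sqrt (2 * π) * Real.sqrt (1 - s^2) :=
    Real.sqrt_mul h2π.le _
  have hs2 : Real.sqrt (2*π) * Real.sqrt (2*π) = 2*π := Real.mul_self_sqrt h2π.le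
  have hsqne : Real.sqrt (1 - s^2) ≠ 0 := by positivity
  have hsqne2 : Real.sqrt (2*π) ≠ 0 := by positivity
  rw [mul_mul_mul_comm]
  congr 1
  · rw [mul_one, hs1, ← mul_inv, ← mul_assoc, hs2, one_div]
  · rw [← Real.exp_add]
    congr 1
    field_simp
    ring

lemma bivGauss_symm (s x y : ℝ) : bivGauss s x y = bivGauss s y x := by
  unfold bivGauss; ring_nf

lemma bivGauss_nonneg (s x y : ℝ) : 0 ≤ bivGauss s x y := by
  unfold bivGauss; positivity

noncomputable abbrev stdG : ℝ → ℝ := gaussianPDFReal 0 1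

lemma stdG_nonneg (x : ℝ) : 0 ≤ stdG x := gaussianPDFReal_nonneg 0 1 x

lemma integrable_stdG : Integrable stdG := integrable_gaussianPDFReal 0 1

lemma integral_stdG : ∫ x, stdG x = 1 := integral_gaussianPDFReal_eq_one 0 one_ne_zero

lemma integrable_bivGauss_y {s : ℝ} (hs : s ∈ Ioo (-1:ℝ) 1) (x : ℝ) :
    Integrable (fun y => bivGauss s x y) := by
  simp only [bivGauss_factor hs x]
  exact (integrable_gaussianPDFReal _ _).const_mul _

lemma integral_bivGauss_y {s : ℝ} (hs : s ∈ Ioo (-1:ℝ) 1) (x : ℝ) :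
    ∫ y, bivGauss s x y = stdG x := by
  simp only [bivGauss_factor hs x]
  rw [integral_const_mul]
  erw [integral_gaussianPDFReal_eq_one]
  · simp [stdG]
  · exact ne_of_gt (by exact_mod_cast one_sub_sq_pos hs)

lemma integrable_bivGauss_x {s : ℝ} (hs : s ∈ Ioo (-1:ℝ) 1) (y : ℝ) :
    Integrable (fun x => bivGauss s x y) := by
  simp only [fun x => bivGauss_symm s x y]
  exact integrable_bivGauss_y hs y

lemma integral_bivGauss_x {s : ℝ} (hs : s ∈ Ioo (-1:ℝ) 1) (y : ℝ) :
    ∫ x, bivGauss s x y = stdG y := by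
  simp only [fun x => bivGauss_symm s x y]
  exact integral_bivGauss_y hs y

lemma continuous_bivGauss_fixed (s : ℝ) :
    Continuous (fun p : ℝ × ℝ => bivGauss s p.1 p.2) := by
  unfold bivGauss
  fun_prop

/-! ### Derivative chain in `σ` -/

noncomputable def tI (s : ℝ) : ℝ := (1 - s^2)⁻¹

noncomputable def w (s x y : ℝ) : ℝ :=
  s * tI s + x*y*tI s - s*(x^2 - 2*s*x*y + y^2)*(tI s)^2

noncomputable def w1 (s x y : ℝ) : ℝ :=
  tI s + 2*s^2*(tI s)^2 + 2*s*x*y*(tI s)^2 -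
    ((x^2 - 2*s*x*y + y^2)*(tI s)^2 - 2*s*x*y*(tI s)^2
      + 4*s^2*(x^2 - 2*s*x*y + y^2)*(tI s)^3)

noncomputable def w2 (s x y : ℝ) : ℝ :=
  2*s*(tI s)^2 + (4*s*(tI s)^2 + 8*s^3*(tI s)^3) + (2*x*y*(tI s)^2 + 8*s^2*x*y*(tI s)^3) -
    (((-(2*x*y))*(tI s)^2 + 4*s*(x^2 - 2*s*x*y + y^2)*(tI s)^3)
      - (2*x*y*(tI s)^2 + 8*s^2*x*y*(tI s)^3)
      + (8*s*(x^2 - 2*s*x*y + y^2)*(tI s)^3 - 8*s^2*x*y*(tI s)^3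
          + 24*s^3*(x^2 - 2*s*x*y + y^2)*(tI s)^4))

lemma hasDerivAt_tI {s : ℝ} (h : 1 - s^2 ≠ 0) :
    HasDerivAt tI (2*s*(tI s)^2) s := by
  have hu : HasDerivAt (fun s : ℝ => 1 - s^2) (-(2*s)) s := by
    simpa using (hasDerivAt_pow 2 s).const_sub 1
  have := hu.inv h
  refine this.congr_deriv (Eq.symm ?_)
  unfold tI
  field_simp

lemma hasDerivAt_Q {s : ℝ} (x y : ℝ) :
    HasDerivAt (fun s => x^2 - 2*s*x*y + y^2) (-(2*x*y)) s := by
  have : HasDerivAt (fun s : ℝ => 2*s*x*y) (2*x*y) s := by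
    simpa using (((hasDerivAt_id s).const_mul 2).mul_const x).mul_const y
  simpa using ((this.const_sub (x^2)).add_const (y^2))

lemma hasDerivAt_w {s : ℝ} (h : 1 - s^2 ≠ 0) (x y : ℝ) :
    HasDerivAt (fun s => w s x y) (w1 s x y) s := by
  have ht := hasDerivAt_tI h
  have hid := hasDerivAt_id s
  have H := ((hid.mul ht).add (ht.const_mul (x*y))).sub
    (((hid.mul (hasDerivAt_Q x y)).mul (ht.pow 2)))
  simp only [id_eq] at H
  refine H.congr_deriv (Eq.symm ?_)
  simp only [Pi.mul_apply, Pi.add_apply, Pi.sub_apply, Pi.pow_apply, Pi.inv_apply, id_eq]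
  unfold w1
  ring

lemma hasDerivAt_w1 {s : ℝ} (h : 1 - s^2 ≠ 0) (x y : ℝ) :
    HasDerivAt (fun s => w1 s x y) (w2 s x y) s := by
  have ht := hasDerivAt_tI h
  have hid := hasDerivAt_id s
  have hs2 : HasDerivAt (fun s : ℝ => 2*s^2) (2*(2*s)) s := by
    simpa using (hasDerivAt_pow 2 s).const_mul 2
  have hsxy : HasDerivAt (fun s : ℝ => 2*s*x*y) (2*x*y) s := by
    simpa using (((hasDerivAt_id s).const_mul 2).mul_const x).mul_const y
  have h4s2 : HasDerivAt (fun s : ℝ => 4*s^2) (4*(2*s)) s := by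
    simpa using (hasDerivAt_pow 2 s).const_mul 4
  have H := ((ht.add (hs2.mul (ht.pow 2))).add (hsxy.mul (ht.pow 2))).sub
    ((((hasDerivAt_Q x y).mul (ht.pow 2)).sub (hsxy.mul (ht.pow 2))).add
      (((h4s2.mul (hasDerivAt_Q x y)).mul (ht.pow 3))))
  refine H.congr_deriv (Eq.symm ?_)
  simp only [Pi.mul_apply, Pi.add_apply, Pi.sub_apply, Pi.pow_apply, Pi.inv_apply, id_eq]
  unfold w2
  ring

lemma hasDerivAt_bivGauss {s : ℝ} (hs : s ∈ Ioo (-1:ℝ) 1) (x y : ℝ) :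
    HasDerivAt (fun s => bivGauss s x y) (w s x y * bivGauss s x y) s := by
  have h1 : (0:ℝ) < 1 - s ^ 2 := one_sub_sq_pos hs
  have h1' : (1:ℝ) - s ^ 2 ≠ 0 := ne_of_gt h1
  have hsq : Real.sqrt (1 - s^2) ≠ 0 := by positivity
  have hu : HasDerivAt (fun s : ℝ => 1 - s^2) (-(2*s)) s := by
    simpa using (hasDerivAt_pow 2 s).const_sub 1
  have hvsq : HasDerivAt (fun s : ℝ => Real.sqrt (1 - s^2))
      (1 / (2 * Real.sqrt (1 - s^2)) * (-(2*s))) s :=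
    (Real.hasDerivAt_sqrt h1').comp s hu
  have hden : 2 * π * Real.sqrt (1 - s^2) ≠ 0 := by positivity
  have hc : HasDerivAt (fun s : ℝ => 2 * π * Real.sqrt (1 - s^2))
      (2 * π * (1 / (2 * Real.sqrt (1 - s^2)) * (-(2*s)))) s := hvsq.const_mul (2*π)
  have hinv := hc.inv hden
  have hq : HasDerivAt (fun s : ℝ => -(x^2 - 2*s*x*y + y^2) / (2 * (1 - s^2)))
      ((-(-(2*x*y)) * (2*(1-s^2)) - (-(x^2-2*s*x*y+y^2)) * (2*(-(2*s)))) / (2*(1-s^2))^2) s :=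
    (hasDerivAt_Q x y).neg.div (hu.const_mul 2) (by simpa using h1')
  have hexp := hq.exp
  have H := hinv.mul hexp
  have hfun : (fun s => bivGauss s x y) =
      fun s : ℝ => (2 * π * Real.sqrt (1 - s^2))⁻¹ *
        Real.exp (-(x^2 - 2*s*x*y + y^2) / (2 * (1 - s^2))) := by
    funext u
    unfold bivGauss
    rw [one_div]
  rw [hfun]
  refine H.congr_deriv (Eq.symm ?_)
  simp only [Pi.mul_apply, Pi.add_apply, Pi.sub_apply, Pi.pow_apply, Pi.inv_apply, id_eq]
  unfold bivGauss w tI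
  rw [one_div]
  have hss : Real.sqrt (1 - s^2) ^ 2 = 1 - s^2 := Real.sq_sqrt h1.le
  set v := Real.sqrt (1 - s^2) with hvdef
  rw [← hss]
  have hvne : v ≠ 0 := hsq
  have hπ : π ≠ 0 := ne_of_gt Real.pi_pos
  field_simp
  ring

/-! ### The chain `B k` of σ-derivatives of `bivGauss` -/

noncomputable def B : ℕ → ℝ → ℝ → ℝ → ℝ
  | 0 => bivGauss
  | 1 => fun s x y => w s x y * bivGauss s x y
  | 2 => fun s x y => (w1 s x y + (w s x y)^2) * bivGauss s x y
  | _ => fun s x y => (w2 s x y + 3*(w s x y)*(w1 s x y) + (w s x y)^3) * bivGauss s x y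

lemma hasDerivAt_B {k : ℕ} (hk : k ≤ 2) {s : ℝ} (hs : s ∈ Ioo (-1:ℝ) 1) (x y : ℝ) :
    HasDerivAt (fun s => B k s x y) (B (k+1) s x y) s := by
  have h1' : (1:ℝ) - s ^ 2 ≠ 0 := ne_of_gt (one_sub_sq_pos hs)
  interval_cases k
  · exact hasDerivAt_bivGauss hs x y
  · have H := (hasDerivAt_w h1' x y).mul (hasDerivAt_bivGauss hs x y)
    refine H.congr_deriv (Eq.symm ?_)
    show (w1 s x y + (w s x y)^2) * bivGauss s x y = _
    ring
  · have H := ((hasDerivAt_w1 h1' x y).add ((hasDerivAt_w h1' x y).mul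
      (hasDerivAt_w h1' x y))).mul (hasDerivAt_bivGauss hs x y)
    have hfun : (fun s => B 2 s x y) = fun s => (w1 s x y + w s x y * w s x y) * bivGauss s x y := by
      funext u; show (w1 u x y + (w u x y)^2) * bivGauss u x y = _; ring
    rw [show B 3 = fun s x y => (w2 s x y + 3*(w s x y)*(w1 s x y) + (w s x y)^3) * bivGauss s x y
      from rfl, hfun]
    refine H.congr_deriv (Eq.symm ?_)
    simp only [Pi.mul_apply, Pi.add_apply, Pi.sub_apply, Pi.pow_apply, Pi.inv_apply, id_eq]
    ring

abbrev Ω3 : Set (ℝ × ℝ × ℝ) := Ioo (-1:ℝ) 1 ×ˢ (univ : Set (ℝ × ℝ))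

lemma continuousOn_bivGauss3 :
    ContinuousOn (fun p : ℝ×ℝ×ℝ => bivGauss p.1 p.2.1 p.2.2) Ω3 := by
  unfold bivGauss
  fun_prop (disch := (rintro ⟨s,x,y⟩ ⟨hs,-⟩; have h := one_sub_sq_pos hs; positivity))

lemma continuousOn_B {k : ℕ} :
    ContinuousOn (fun p : ℝ×ℝ×ℝ => B k p.1 p.2.1 p.2.2) Ω3 := by
  have hb := continuousOn_bivGauss3
  have hw : ContinuousOn (fun p : ℝ×ℝ×ℝ => w p.1 p.2.1 p.2.2) Ω3 := by
    unfold w tI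
    fun_prop (disch := (rintro ⟨s,x,y⟩ ⟨hs,-⟩; exact ne_of_gt (one_sub_sq_pos hs)))
  have hw1 : ContinuousOn (fun p : ℝ×ℝ×ℝ => w1 p.1 p.2.1 p.2.2) Ω3 := by
    unfold w1 tI
    fun_prop (disch := (rintro ⟨s,x,y⟩ ⟨hs,-⟩; exact ne_of_gt (one_sub_sq_pos hs)))
  have hw2 : ContinuousOn (fun p : ℝ×ℝ×ℝ => w2 p.1 p.2.1 p.2.2) Ω3 := by
    unfold w2 tI
    fun_prop (disch := (rintro ⟨s,x,y⟩ ⟨hs,-⟩; exact ne_of_gt (one_sub_sq_pos hs)))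
  match k with
  | 0 => exact hb
  | 1 => exact hw.mul hb
  | 2 => exact (hw1.add (hw.pow 2)).mul hb
  | (n+3) => exact ((hw2.add ((continuousOn_const.mul hw).mul hw1)).add (hw.pow 3)).mul hb

/-! ### Generic machinery -/

lemma iteratedDeriv_congr_on {f g : ℝ → ℝ} {O : Set ℝ} (hO : IsOpen O)
    (hfg : ∀ s ∈ O, f s = g s) :
    ∀ l : ℕ, ∀ s ∈ O, iteratedDeriv l f s = iteratedDeriv l g s := by
  intro l
  induction l with
  | zero => simpa using hfg
  | succ n ih =>
    intro s hs
    rw [iteratedDeriv_succ, iteratedDeriv_succ]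
    exact Filter.EventuallyEq.deriv_eq (Filter.eventuallyEq_of_mem (hO.mem_nhds hs) ih)

lemma iteratedDeriv_chain (f : ℕ → ℝ → ℝ) {O : Set ℝ} (hO : IsOpen O)
    (h : ∀ k, ∀ s ∈ O, HasDerivAt (f k) (f (k+1) s) s) :
    ∀ l : ℕ, ∀ s ∈ O, iteratedDeriv l (f 0) s = f l s := by
  intro l
  induction l with
  | zero => simp
  | succ n ih =>
    intro s hs
    rw [iteratedDeriv_succ]
    have h1 : deriv (iteratedDeriv n (f 0)) s = deriv (f n) s :=
      Filter.EventuallyEq.deriv_eq (Filter.eventuallyEq_of_mem (hO.mem_nhds hs) ih)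
    rw [h1, (h n s hs).deriv]

lemma contOn_param_integral {P : Type*} [TopologicalSpace P] [LocallyCompactSpace P]
    [FirstCountableTopology P] {O : Set P} (hO : IsOpen O) {K : Set ℝ} (hK : IsCompact K) (hKm : MeasurableSet K)
    {F : P → ℝ → ℝ} (hF : ContinuousOn (fun q : P × ℝ => F q.1 q.2) (O ×ˢ K)) :
    ContinuousOn (fun p => ∫ x in K, F p x) O := by
  intro p hp
  obtain ⟨C, hCc, hpC, hCO⟩ := exists_compact_subset hO hp
  have hCK : IsCompact (C ×ˢ K) := hCc.prod hK
  obtain ⟨M, hM⟩ := hCK.exists_bound_of_continuousOn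
    (hF.mono (prod_mono hCO Subset.rfl))
  apply ContinuousAt.continuousWithinAt
  have hcontK : ∀ p' ∈ O, ContinuousOn (fun x => F p' x) K := by
    intro p' hp'
    exact hF.comp ((continuous_const.prodMk continuous_id).continuousOn)
      (fun x hx => ⟨hp', hx⟩)
  apply continuousAt_of_dominated (bound := fun _ => M)
  · filter_upwards [hO.mem_nhds hp] with p' hp'
    exact ((hcontK p' hp').aestronglyMeasurable hKm)
  · filter_upwards [mem_interior_iff_mem_nhds.mp hpC] with p' hp'
    have hp'' : p' ∈ C := hp'
    refine (ae_restrict_iff' hKm).2 (Filter.Eventually.of_forall fun x hx => ?_)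
    exact hM (p', x) ⟨hp'', hx⟩
  · exact (integrableOn_const_iff (C := M)).2 (Or.inr hK.measure_lt_top)
  · refine (ae_restrict_iff' hKm).2 (Filter.Eventually.of_forall fun x hx => ?_)
    have hmap : ContinuousWithinAt (fun p' : P => ((p', x) : P × ℝ)) O p :=
      (continuous_id.prodMk continuous_const).continuousWithinAt
    exact (ContinuousWithinAt.comp (f := fun p' : P => ((p', x) : P × ℝ)) (x := p)
      (s := O) (t := O ×ˢ K) (g := fun q : P × ℝ => F q.1 q.2) (hF ⟨p, x⟩ ⟨hp, hx⟩) hmap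
      (fun p' hp' => Set.mk_mem_prod hp' hx)).continuousAt (hO.mem_nhds hp)

lemma hasDerivAt_param_integral {O : Set ℝ} (hO : IsOpen O) {K : Set ℝ}
    (hK : IsCompact K) (hKm : MeasurableSet K) {F F' : ℝ → ℝ → ℝ}
    (hF : ContinuousOn (fun q : ℝ × ℝ => F q.1 q.2) (O ×ˢ K))
    (hF' : ContinuousOn (fun q : ℝ × ℝ => F' q.1 q.2) (O ×ˢ K))
    (hd : ∀ x ∈ K, ∀ s ∈ O, HasDerivAt (fun s => F s x) (F' s x) s)
    {s₀ : ℝ} (hs₀ : s₀ ∈ O) :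
    HasDerivAt (fun s => ∫ x in K, F s x) (∫ x in K, F' s₀ x) s₀ := by
  obtain ⟨ε, hε, hball⟩ := Metric.isOpen_iff.mp hO s₀ hs₀
  have hcb : Metric.closedBall s₀ (ε/2) ⊆ O :=
    (Metric.closedBall_subset_ball (by linarith)).trans hball
  have hcbK : IsCompact (Metric.closedBall s₀ (ε/2) ×ˢ K) :=
    (isCompact_closedBall _ _).prod hK
  obtain ⟨M, hM⟩ := hcbK.exists_bound_of_continuousOn
    (hF'.mono (prod_mono hcb Subset.rfl))
  have hcontK : ∀ (G : ℝ → ℝ → ℝ), ContinuousOn (fun q : ℝ × ℝ => G q.1 q.2) (O ×ˢ K) →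
      ∀ p' ∈ O, ContinuousOn (fun x => G p' x) K := by
    intro G hG p' hp'
    exact hG.comp ((continuous_const.prodMk continuous_id).continuousOn)
      (fun x hx => ⟨hp', hx⟩)
  refine (hasDerivAt_integral_of_dominated_loc_of_deriv_le (F := F) (F' := F')
    (bound := fun _ => M) (Metric.ball_mem_nhds s₀ (half_pos hε)) ?_ ?_ ?_ ?_ ?_ ?_).2
  · filter_upwards [hO.mem_nhds hs₀] with p' hp'
    exact ((hcontK F hF p' hp').aestronglyMeasurable hKm)
  · exact (hcontK F hF s₀ hs₀).integrableOn_compact hK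
  · exact ((hcontK F' hF' s₀ hs₀).aestronglyMeasurable hKm)
  · refine (ae_restrict_iff' hKm).2 (Filter.Eventually.of_forall fun x hx => ?_)
    intro s hsball
    exact hM (s, x) ⟨Metric.ball_subset_closedBall hsball, hx⟩
  · exact (integrableOn_const_iff (C := M)).2 (Or.inr hK.measure_lt_top)
  · refine (ae_restrict_iff' hKm).2 (Filter.Eventually.of_forall fun x hx => ?_)
    intro s hsball
    exact hd x hx s (hcb (Metric.ball_subset_closedBall hsball))

/-! ### Families of compact parametric integrals -/

noncomputable def Tk (a₂ b₂ : ℝ) (k : ℕ) (s x : ℝ) : ℝ := ∫ y in Icc a₂ b₂, B k s x y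

noncomputable def Uk (a₁ b₁ : ℝ) (k : ℕ) (s t : ℝ) : ℝ := ∫ x in Icc a₁ b₁, B k s x t

noncomputable def DDk (a₁ b₁ a₂ b₂ : ℝ) (k : ℕ) (s : ℝ) : ℝ :=
  ∫ x in Icc a₁ b₁, Tk a₂ b₂ k s x

abbrev OO : Set ℝ := Ioo (-1:ℝ) 1

lemma contOn_B_fix_y (k : ℕ) (t : ℝ) :
    ContinuousOn (fun q : ℝ×ℝ => B k q.1 q.2 t) (OO ×ˢ (univ : Set ℝ)) := by
  have hmap : Continuous (fun q : ℝ×ℝ => ((q.1, q.2, t) : ℝ×ℝ×ℝ)) := by fun_prop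
  exact continuousOn_B.comp hmap.continuousOn
    (fun q hq => ⟨hq.1, mem_univ _⟩)

lemma contOn_B_fix_x (k : ℕ) (x : ℝ) :
    ContinuousOn (fun q : ℝ×ℝ => B k q.1 x q.2) (OO ×ˢ (univ : Set ℝ)) := by
  have hmap : Continuous (fun q : ℝ×ℝ => ((q.1, x, q.2) : ℝ×ℝ×ℝ)) := by fun_prop
  exact continuousOn_B.comp hmap.continuousOn
    (fun q hq => ⟨hq.1, mem_univ _⟩)

lemma continuous_B_fixed (k : ℕ) (s : ℝ) :
    Continuous (fun p : ℝ×ℝ => B k s p.1 p.2) := by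
  match k with
  | 0 => show Continuous (fun p : ℝ×ℝ => bivGauss s p.1 p.2); unfold bivGauss; fun_prop
  | 1 =>
    show Continuous (fun p : ℝ×ℝ => w s p.1 p.2 * bivGauss s p.1 p.2)
    unfold w tI bivGauss; fun_prop
  | 2 =>
    show Continuous (fun p : ℝ×ℝ =>
      (w1 s p.1 p.2 + (w s p.1 p.2)^2) * bivGauss s p.1 p.2)
    unfold w w1 tI bivGauss; fun_prop
  | (n+3) =>
    show Continuous (fun p : ℝ×ℝ =>
      (w2 s p.1 p.2 + 3*(w s p.1 p.2)*(w1 s p.1 p.2) + (w s p.1 p.2)^3) * bivGauss s p.1 p.2)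
    unfold w w1 w2 tI bivGauss; fun_prop

lemma contOn_T (a₂ b₂ : ℝ) (k : ℕ) :
    ContinuousOn (fun q : ℝ×ℝ => Tk a₂ b₂ k q.1 q.2) (OO ×ˢ (univ : Set ℝ)) := by
  apply contOn_param_integral (isOpen_Ioo.prod isOpen_univ) isCompact_Icc measurableSet_Icc
    (F := fun (p : ℝ×ℝ) y => B k p.1 p.2 y)
  have hmap : Continuous (fun q : (ℝ×ℝ)×ℝ => ((q.1.1, q.1.2, q.2) : ℝ×ℝ×ℝ)) := by fun_prop
  exact continuousOn_B.comp hmap.continuousOn (fun q hq => ⟨hq.1.1, mem_univ _⟩)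

lemma continuous_T_fixed (a₂ b₂ s : ℝ) (k : ℕ) :
    Continuous (fun x => Tk a₂ b₂ k s x) := by
  rw [← continuousOn_univ]
  apply contOn_param_integral isOpen_univ isCompact_Icc measurableSet_Icc
    (F := fun x y => B k s x y)
  exact ((continuous_B_fixed k s).comp (continuous_id')).continuousOn.mono (subset_univ _)

lemma continuous_U_fixed (a₁ b₁ s : ℝ) (k : ℕ) :
    Continuous (fun t => Uk a₁ b₁ k s t) := by
  rw [← continuousOn_univ]
  apply contOn_param_integral isOpen_univ isCompact_Icc measurableSet_Icc
    (F := fun t x => B k s x t)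
  exact ((continuous_B_fixed k s).comp (continuous_swap)).continuousOn.mono (subset_univ _)

lemma hasDerivAt_U {a₁ b₁ : ℝ} {k : ℕ} (hk : k ≤ 2) {s : ℝ} (hs : s ∈ OO) (t : ℝ) :
    HasDerivAt (fun s => Uk a₁ b₁ k s t) (Uk a₁ b₁ (k+1) s t) s := by
  apply hasDerivAt_param_integral isOpen_Ioo isCompact_Icc measurableSet_Icc
    ((contOn_B_fix_y k t).mono (prod_mono Subset.rfl (subset_univ _)))
    ((contOn_B_fix_y (k+1) t).mono (prod_mono Subset.rfl (subset_univ _)))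
    (fun x _ s hsO => hasDerivAt_B hk hsO x t) hs

lemma hasDerivAt_T {a₂ b₂ : ℝ} {k : ℕ} (hk : k ≤ 2) {s : ℝ} (hs : s ∈ OO) (x : ℝ) :
    HasDerivAt (fun s => Tk a₂ b₂ k s x) (Tk a₂ b₂ (k+1) s x) s := by
  apply hasDerivAt_param_integral isOpen_Ioo isCompact_Icc measurableSet_Icc
    ((contOn_B_fix_x k x).mono (prod_mono Subset.rfl (subset_univ _)))
    ((contOn_B_fix_x (k+1) x).mono (prod_mono Subset.rfl (subset_univ _)))
    (fun y _ s hsO => hasDerivAt_B hk hsO x y) hs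

lemma hasDerivAt_DD {a₁ b₁ a₂ b₂ : ℝ} {k : ℕ} (hk : k ≤ 2) {s : ℝ} (hs : s ∈ OO) :
    HasDerivAt (fun s => DDk a₁ b₁ a₂ b₂ k s) (DDk a₁ b₁ a₂ b₂ (k+1) s) s := by
  apply hasDerivAt_param_integral isOpen_Ioo isCompact_Icc measurableSet_Icc
    ((contOn_T a₂ b₂ k).mono (prod_mono Subset.rfl (subset_univ _)))
    ((contOn_T a₂ b₂ (k+1)).mono (prod_mono Subset.rfl (subset_univ _)))
    (fun x _ s hsO => hasDerivAt_T hk hsO x) hs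

/-! ### Rewriting the φ functions -/

lemma T0_eq (a₂ b₂ s x : ℝ) : Tk a₂ b₂ 0 s x = ∫ y in Icc a₂ b₂, bivGauss s x y := rfl

lemma T0_nonneg (a₂ b₂ s x : ℝ) : 0 ≤ Tk a₂ b₂ 0 s x :=
  setIntegral_nonneg measurableSet_Icc (fun y _ => bivGauss_nonneg s x y)

lemma T0_le_stdG {s : ℝ} (hs : s ∈ OO) (a₂ b₂ x : ℝ) : Tk a₂ b₂ 0 s x ≤ stdG x := by
  rw [← integral_bivGauss_y hs x]
  exact setIntegral_le_integral (integrable_bivGauss_y hs x)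
    (Filter.Eventually.of_forall (fun y => bivGauss_nonneg s x y))

lemma integrable_T0 {s : ℝ} (hs : s ∈ OO) (a₂ b₂ : ℝ) :
    Integrable (fun x => Tk a₂ b₂ 0 s x) := by
  apply Integrable.mono' integrable_stdG
    ((continuous_T_fixed a₂ b₂ s 0).aestronglyMeasurable)
  refine Filter.Eventually.of_forall (fun x => ?_)
  rw [Real.norm_eq_abs, abs_of_nonneg (T0_nonneg a₂ b₂ s x)]
  exact T0_le_stdG hs a₂ b₂ x

lemma phi01_eq {s : ℝ} (hs : s ∈ OO) (a₁ b₁ t : ℝ) :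
    phi01 a₁ b₁ s t = stdG t - Uk a₁ b₁ 0 s t := by
  have h := integral_add_compl (measurableSet_Icc (a := a₁) (b := b₁))
    (integrable_bivGauss_x hs t)
  unfold phi01 Uk
  rw [eq_sub_iff_add_eq, ← integral_bivGauss_x hs t]
  rw [show B 0 = bivGauss from rfl] at *
  linarith [h]

lemma phi10_eq {s : ℝ} (hs : s ∈ OO) (a₂ b₂ x : ℝ) :
    phi10 a₂ b₂ s x = stdG x - Tk a₂ b₂ 0 s x := by
  have h := integral_add_compl (measurableSet_Icc (a := a₂) (b := b₂))
    (integrable_bivGauss_y hs x)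
  unfold phi10 Tk
  rw [eq_sub_iff_add_eq, ← integral_bivGauss_y hs x]
  rw [show B 0 = bivGauss from rfl] at *
  linarith [h]

lemma integrable_uncurry_bG_right {s : ℝ} (hs : s ∈ OO) (a₂ b₂ : ℝ) :
    Integrable (Function.uncurry (fun x y => bivGauss s x y))
      (volume.prod (volume.restrict (Icc a₂ b₂))) := by
  refine (integrable_prod_iff ?_).2 ⟨?_, ?_⟩
  · exact (continuous_bivGauss_fixed s).aestronglyMeasurable
  · exact Filter.Eventually.of_forall
      (fun x => (integrable_bivGauss_y hs x).integrableOn)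
  · have hnorm : (fun x => ∫ y in Icc a₂ b₂,
        ‖Function.uncurry (fun x y => bivGauss s x y) (x, y)‖) =
        fun x => Tk a₂ b₂ 0 s x := by
      funext x
      simp only [Function.uncurry_apply_pair]
      rw [T0_eq]
      refine setIntegral_congr_fun measurableSet_Icc (fun y _ => ?_)
      rw [Real.norm_eq_abs, abs_of_nonneg (bivGauss_nonneg s x y)]
    rw [hnorm]
    exact integrable_T0 hs a₂ b₂

lemma integral_T0 {s : ℝ} (hs : s ∈ OO) (a₂ b₂ : ℝ) :
    ∫ x, Tk a₂ b₂ 0 s x = ∫ y in Icc a₂ b₂, stdG y := by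
  have h := integral_integral_swap (f := fun x y => bivGauss s x y)
    (μ := volume) (ν := volume.restrict (Icc a₂ b₂))
    (integrable_uncurry_bG_right hs a₂ b₂)
  rw [show (fun x => Tk a₂ b₂ 0 s x) = fun x => ∫ y in Icc a₂ b₂, bivGauss s x y from rfl]
  rw [h]
  exact setIntegral_congr_fun measurableSet_Icc (fun y _ => integral_bivGauss_x hs y)

lemma integrableOn_rect {f : ℝ×ℝ → ℝ} (hf : Continuous f) (a₁ b₁ a₂ b₂ : ℝ) :
    Integrable f ((volume.restrict (Icc a₁ b₁)).prod (volume.restrict (Icc a₂ b₂))) := by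
  rw [Measure.prod_restrict]
  exact hf.continuousOn.integrableOn_compact (isCompact_Icc.prod isCompact_Icc)

lemma swap_UT {s : ℝ} (a₁ b₁ a₂ b₂ : ℝ) (k : ℕ) :
    ∫ t in Icc a₂ b₂, Uk a₁ b₁ k s t = DDk a₁ b₁ a₂ b₂ k s := by
  have h := integral_integral_swap (f := fun t x => B k s x t)
    (μ := volume.restrict (Icc a₂ b₂)) (ν := volume.restrict (Icc a₁ b₁))
    (integrableOn_rect ((continuous_B_fixed k s).comp continuous_swap) a₂ b₂ a₁ b₁)
  exact h

lemma phi00_eq {s : ℝ} (hs : s ∈ OO) (a₁ b₁ a₂ b₂ : ℝ) :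
    phi00 a₁ b₁ a₂ b₂ s = (∫ x in (Icc a₁ b₁)ᶜ, stdG x) - (∫ y in Icc a₂ b₂, stdG y)
      + DDk a₁ b₁ a₂ b₂ 0 s := by
  have hT0 : ∀ x, (∫ y in (Icc a₂ b₂)ᶜ, bivGauss s x y) = stdG x - Tk a₂ b₂ 0 s x := by
    intro x
    have h := integral_add_compl (measurableSet_Icc (a := a₂) (b := b₂))
      (integrable_bivGauss_y hs x)
    rw [eq_sub_iff_add_eq, ← integral_bivGauss_y hs x, T0_eq]
    linarith [h]
  unfold phi00
  rw [setIntegral_congr_fun (measurableSet_Icc.compl) (fun x _ => hT0 x)]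
  rw [integral_sub (integrable_stdG.restrict) ((integrable_T0 hs a₂ b₂).restrict)]
  have hsplit := integral_add_compl (measurableSet_Icc (a := a₁) (b := b₁))
    (integrable_T0 hs a₂ b₂)
  have : (∫ x in (Icc a₁ b₁)ᶜ, Tk a₂ b₂ 0 s x)
      = (∫ y in Icc a₂ b₂, stdG y) - DDk a₁ b₁ a₂ b₂ 0 s := by
    rw [eq_sub_iff_add_eq]
    have hDD : DDk a₁ b₁ a₂ b₂ 0 s = ∫ x in Icc a₁ b₁, Tk a₂ b₂ 0 s x := rfl
    rw [hDD, ← integral_T0 hs a₂ b₂]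
    linarith [hsplit]
  rw [this]
  ring

/-! ### Iterated derivatives of the φ functions -/

lemma iteratedDeriv_chain' (f : ℕ → ℝ → ℝ) {O : Set ℝ} (hO : IsOpen O) (L : ℕ)
    (h : ∀ k < L, ∀ s ∈ O, HasDerivAt (f k) (f (k+1) s) s) :
    ∀ l ≤ L, ∀ s ∈ O, iteratedDeriv l (f 0) s = f l s := by
  intro l
  induction l with
  | zero => intro _; simp
  | succ n ih =>
    intro hl s hs
    rw [iteratedDeriv_succ]
    have h1 : deriv (iteratedDeriv n (f 0)) s = deriv (f n) s :=
      Filter.EventuallyEq.deriv_eq (Filter.eventuallyEq_of_mem (hO.mem_nhds hs)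
        (fun u hu => ih (Nat.le_of_succ_le hl) u hu))
    rw [h1, (h n (Nat.lt_of_succ_le hl) s hs).deriv]

lemma iteratedDeriv_zero_fun (l : ℕ) : iteratedDeriv l (fun _ : ℝ => (0:ℝ)) = fun _ => 0 := by
  induction l with
  | zero => rfl
  | succ n ih => rw [iteratedDeriv_succ', deriv_const', ih]

lemma iteratedDeriv_one_fun {l : ℕ} (hl : 1 ≤ l) (x : ℝ) :
    iteratedDeriv l (fun _ : ℝ => (1:ℝ)) x = 0 := by
  obtain ⟨m, rfl⟩ := Nat.exists_eq_add_of_le hl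
  rw [show 1 + m = m + 1 from Nat.add_comm 1 m, iteratedDeriv_succ', deriv_const',
    iteratedDeriv_zero_fun]

lemma iter_phi01 {l : ℕ} (hl : 1 ≤ l) (hl3 : l ≤ 3) {σ : ℝ} (hσ : σ ∈ OO) (a₁ b₁ t : ℝ) :
    iteratedDeriv l (fun s => phi01 a₁ b₁ s t) σ = -(Uk a₁ b₁ l σ t) := by
  set f : ℕ → ℝ → ℝ := fun k => match k with
    | 0 => fun s => stdG t - Uk a₁ b₁ 0 s t
    | (m+1) => fun s => -(Uk a₁ b₁ (m+1) s t) with hf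
  have hloc : iteratedDeriv l (fun s => phi01 a₁ b₁ s t) σ = iteratedDeriv l (f 0) σ :=
    iteratedDeriv_congr_on isOpen_Ioo (fun s hs => phi01_eq hs a₁ b₁ t) l σ hσ
  have hchain : ∀ k < 3, ∀ s ∈ OO, HasDerivAt (f k) (f (k+1) s) s := by
    intro k hk s hs
    match k with
    | 0 => exact (hasDerivAt_U (by norm_num) hs t).const_sub (stdG t)
    | 1 => exact (hasDerivAt_U (by norm_num) hs t).neg
    | 2 => exact (hasDerivAt_U (by norm_num) hs t).neg
  rw [hloc, iteratedDeriv_chain' f isOpen_Ioo 3 hchain l hl3 σ hσ]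
  match l, hl with
  | 1, _ => rfl
  | 2, _ => rfl
  | 3, _ => rfl

lemma iter_phi10 {l : ℕ} (hl : 1 ≤ l) (hl3 : l ≤ 3) {σ : ℝ} (hσ : σ ∈ OO) (a₂ b₂ x : ℝ) :
    iteratedDeriv l (fun s => phi10 a₂ b₂ s x) σ = -(Tk a₂ b₂ l σ x) := by
  set f : ℕ → ℝ → ℝ := fun k => match k with
    | 0 => fun s => stdG x - Tk a₂ b₂ 0 s x
    | (m+1) => fun s => -(Tk a₂ b₂ (m+1) s x) with hf
  have hloc : iteratedDeriv l (fun s => phi10 a₂ b₂ s x) σ = iteratedDeriv l (f 0) σ :=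
    iteratedDeriv_congr_on isOpen_Ioo (fun s hs => phi10_eq hs a₂ b₂ x) l σ hσ
  have hchain : ∀ k < 3, ∀ s ∈ OO, HasDerivAt (f k) (f (k+1) s) s := by
    intro k hk s hs
    match k with
    | 0 => exact (hasDerivAt_T (by norm_num) hs x).const_sub (stdG x)
    | 1 => exact (hasDerivAt_T (by norm_num) hs x).neg
    | 2 => exact (hasDerivAt_T (by norm_num) hs x).neg
  rw [hloc, iteratedDeriv_chain' f isOpen_Ioo 3 hchain l hl3 σ hσ]
  match l, hl with
  | 1, _ => rfl
  | 2, _ => rfl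
  | 3, _ => rfl

lemma iter_phi00 {l : ℕ} (hl : 1 ≤ l) (hl3 : l ≤ 3) {σ : ℝ} (hσ : σ ∈ OO) (a₁ b₁ a₂ b₂ : ℝ) :
    iteratedDeriv l (fun s => phi00 a₁ b₁ a₂ b₂ s) σ = DDk a₁ b₁ a₂ b₂ l σ := by
  set f : ℕ → ℝ → ℝ := fun k => match k with
    | 0 => fun s => (∫ x in (Icc a₁ b₁)ᶜ, stdG x) - (∫ y in Icc a₂ b₂, stdG y)
        + DDk a₁ b₁ a₂ b₂ 0 s
    | (m+1) => fun s => DDk a₁ b₁ a₂ b₂ (m+1) s with hf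
  have hloc : iteratedDeriv l (fun s => phi00 a₁ b₁ a₂ b₂ s) σ = iteratedDeriv l (f 0) σ :=
    iteratedDeriv_congr_on isOpen_Ioo (fun s hs => phi00_eq hs a₁ b₁ a₂ b₂) l σ hσ
  have hchain : ∀ k < 3, ∀ s ∈ OO, HasDerivAt (f k) (f (k+1) s) s := by
    intro k hk s hs
    match k with
    | 0 =>
      exact ((hasDerivAt_const s ((∫ x in (Icc a₁ b₁)ᶜ, stdG x) -
        ∫ y in Icc a₂ b₂, stdG y)).add (hasDerivAt_DD (k := 0) (by norm_num) hs)).congr_deriv (zero_add _)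
    | 1 => exact hasDerivAt_DD (by norm_num) hs
    | 2 => exact hasDerivAt_DD (by norm_num) hs
  rw [hloc, iteratedDeriv_chain' f isOpen_Ioo 3 hchain l hl3 σ hσ]
  match l, hl with
  | 1, _ => rfl
  | 2, _ => rfl
  | 3, _ => rfl

/-! ### Reduction of `muZI` integrals -/

lemma indicator_null_ae {α : Type*} [MeasurableSpace α] {μ : Measure α} {s : Set α}
    (hs : μ s = 0) (f : α → ℝ) : s.indicator f =ᵐ[μ] 0 := by
  filter_upwards [measure_eq_zero_iff_ae_notMem.mp hs] with x hx
  simp [Set.indicator_of_notMem hx]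

lemma integral_muZI_form (a₁ b₁ a₂ b₂ c : ℝ) (g₂ g₃ : ℝ → ℝ) (g₄ : ℝ×ℝ → ℝ)
    (hg₂ : Continuous g₂) (hg₃ : Continuous g₃) (hg₄ : Continuous g₄) :
    ∫ y, (Set.indicator {y : ℝ×ℝ | y.1 = 0 ∧ y.2 = 0} (fun _ => c) y
      + Set.indicator {y : ℝ×ℝ | y.1 = 0 ∧ (y.2 ∈ Icc a₂ b₂ ∧ y.2 ≠ 0)} (fun y => g₂ y.2) y
      + Set.indicator {y : ℝ×ℝ | (y.1 ∈ Icc a₁ b₁ ∧ y.1 ≠ 0) ∧ y.2 = 0} (fun y => g₃ y.1) y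
      + Set.indicator {y : ℝ×ℝ | (y.1 ∈ Icc a₁ b₁ ∧ y.1 ≠ 0) ∧ (y.2 ∈ Icc a₂ b₂ ∧ y.2 ≠ 0)}
          g₄ y) ∂muZI
    = c + (∫ t in Icc a₂ b₂, g₂ t) + (∫ x in Icc a₁ b₁, g₃ x)
      + ∫ x in Icc a₁ b₁, ∫ y in Icc a₂ b₂, g₄ (x, y) := by
  set S₁ : Set (ℝ×ℝ) := {y : ℝ×ℝ | y.1 = 0 ∧ y.2 = 0} with hS₁def
  set S₂ : Set (ℝ×ℝ) := {y : ℝ×ℝ | y.1 = 0 ∧ (y.2 ∈ Icc a₂ b₂ ∧ y.2 ≠ 0)} with hS₂def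
  set S₃ : Set (ℝ×ℝ) := {y : ℝ×ℝ | (y.1 ∈ Icc a₁ b₁ ∧ y.1 ≠ 0) ∧ y.2 = 0} with hS₃def
  set S₄ : Set (ℝ×ℝ) :=
    {y : ℝ×ℝ | (y.1 ∈ Icc a₁ b₁ ∧ y.1 ≠ 0) ∧ (y.2 ∈ Icc a₂ b₂ ∧ y.2 ≠ 0)} with hS₄def
  have hS₁ : S₁ = ({0} : Set ℝ) ×ˢ ({0} : Set ℝ) := by
    ext y
    simp only [hS₁def, Set.mem_setOf_eq, Set.mem_prod, Set.mem_singleton_iff]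
  have hS₂ : S₂ = ({0} : Set ℝ) ×ˢ (Icc a₂ b₂ \ {0}) := by
    ext y
    simp only [hS₂def, Set.mem_setOf_eq, Set.mem_prod, Set.mem_singleton_iff, Set.mem_diff]
  have hS₃ : S₃ = (Icc a₁ b₁ \ {0}) ×ˢ ({0} : Set ℝ) := by
    ext y
    simp only [hS₃def, Set.mem_setOf_eq, Set.mem_prod, Set.mem_singleton_iff, Set.mem_diff]
  have hS₄ : S₄ = (Icc a₁ b₁ \ {0}) ×ˢ (Icc a₂ b₂ \ {0}) := by
    ext y
    simp only [hS₄def, Set.mem_setOf_eq, Set.mem_prod, Set.mem_singleton_iff, Set.mem_diff]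
  have hS₁m : MeasurableSet S₁ := by
    rw [hS₁]; exact (measurableSet_singleton 0).prod (measurableSet_singleton 0)
  have hS₂m : MeasurableSet S₂ := by
    rw [hS₂]
    exact (measurableSet_singleton 0).prod (measurableSet_Icc.diff (measurableSet_singleton 0))
  have hS₃m : MeasurableSet S₃ := by
    rw [hS₃]
    exact (measurableSet_Icc.diff (measurableSet_singleton 0)).prod (measurableSet_singleton 0)
  have hS₄m : MeasurableSet S₄ := by
    rw [hS₄]
    exact (measurableSet_Icc.diff (measurableSet_singleton 0)).prod
      (measurableSet_Icc.diff (measurableSet_singleton 0))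
  set G : ℝ×ℝ → ℝ := fun y => S₁.indicator (fun _ => c) y + S₂.indicator (fun y => g₂ y.2) y
      + S₃.indicator (fun y => g₃ y.1) y + S₄.indicator g₄ y with hG
  have hGm : Measurable G := by
    apply Measurable.add
    apply Measurable.add
    apply Measurable.add
    · exact measurable_const.indicator hS₁m
    · exact (hg₂.measurable.comp measurable_snd).indicator hS₂m
    · exact (hg₃.measurable.comp measurable_fst).indicator hS₃m
    · exact hg₄.measurable.indicator hS₄m
  -- evaluation along the axes
  have hG0t : ∀ t : ℝ, G (0, t) =
      Set.indicator ({0} : Set ℝ) (fun _ => c) t + Set.indicator (Icc a₂ b₂ \ {0}) g₂ t := by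
    intro t
    by_cases ht : t = 0 <;> by_cases ht2 : t ∈ Icc a₂ b₂ <;>
      simp [hG, hS₁def, hS₂def, hS₃def, hS₄def, Set.indicator_apply, ht, ht2, -Set.mem_Icc]
  have hGx0 : ∀ x : ℝ, G (x, 0) =
      Set.indicator ({0} : Set ℝ) (fun _ => c) x + Set.indicator (Icc a₁ b₁ \ {0}) g₃ x := by
    intro x
    by_cases hx : x = 0 <;> by_cases hx2 : x ∈ Icc a₁ b₁ <;>
      simp [hG, hS₁def, hS₂def, hS₃def, hS₄def, Set.indicator_apply, hx, hx2, -Set.mem_Icc]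
  -- integrability of the axis restrictions
  have ia2 : Integrable (fun t : ℝ => Set.indicator ({0} : Set ℝ) (fun _ => c) t) :=
    (integrable_zero _ _ _).congr (indicator_null_ae Real.volume_singleton _).symm
  have ib2 : Integrable (fun t : ℝ => Set.indicator (Icc a₂ b₂ \ {0}) g₂ t) := by
    rw [integrable_indicator_iff (measurableSet_Icc.diff (measurableSet_singleton 0))]
    exact (hg₂.continuousOn.integrableOn_compact isCompact_Icc).mono_set diff_subset
  have ib3 : Integrable (fun x : ℝ => Set.indicator (Icc a₁ b₁ \ {0}) g₃ x) := by
    rw [integrable_indicator_iff (measurableSet_Icc.diff (measurableSet_singleton 0))]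
    exact (hg₃.continuousOn.integrableOn_compact isCompact_Icc).mono_set diff_subset
  -- the product-volume part
  have hnullx : (volume.prod volume) {y : ℝ×ℝ | y.1 = 0} = 0 := by
    have : {y : ℝ×ℝ | y.1 = 0} = ({0} : Set ℝ) ×ˢ (univ : Set ℝ) := by
      ext y
      simp only [Set.mem_setOf_eq, Set.mem_prod, Set.mem_singleton_iff, Set.mem_univ, and_true]
    rw [this, Measure.prod_prod]
    simp
  have hnully : (volume.prod volume) {y : ℝ×ℝ | y.2 = 0} = 0 := by
    have : {y : ℝ×ℝ | y.2 = 0} = (univ : Set ℝ) ×ˢ ({0} : Set ℝ) := by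
      ext y
      simp only [Set.mem_setOf_eq, Set.mem_prod, Set.mem_singleton_iff, Set.mem_univ, true_and]
    rw [this, Measure.prod_prod]
    simp
  have hGae : G =ᵐ[volume.prod volume] Set.indicator (Icc a₁ b₁ ×ˢ Icc a₂ b₂) g₄ := by
    filter_upwards [measure_eq_zero_iff_ae_notMem.mp hnullx, measure_eq_zero_iff_ae_notMem.mp hnully]
      with p h1 h2
    have h1' : p.1 ≠ 0 := h1
    have h2' : p.2 ≠ 0 := h2
    by_cases m1 : p.1 ∈ Icc a₁ b₁ <;> by_cases m2 : p.2 ∈ Icc a₂ b₂ <;>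
      simp [hG, hS₁def, hS₂def, hS₃def, hS₄def, Set.indicator_apply, Set.mem_prod,
        h1', h2', m1, m2, -Set.mem_Icc, -Set.Icc_prod_Icc]
  have i4' : Integrable (Set.indicator (Icc a₁ b₁ ×ˢ Icc a₂ b₂) g₄) (volume.prod volume) := by
    rw [integrable_indicator_iff (measurableSet_Icc.prod measurableSet_Icc)]
    exact hg₄.continuousOn.integrableOn_compact (isCompact_Icc.prod isCompact_Icc)
  -- integrability with respect to the four pieces
  have i1 : Integrable G ((Measure.dirac (0:ℝ)).prod (Measure.dirac (0:ℝ))) := by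
    rw [Measure.dirac_prod_dirac]
    exact (integrable_const (G (0,0))).congr (ae_eq_dirac G).symm
  have i2 : Integrable G ((Measure.dirac (0:ℝ)).prod volume) := by
    rw [Measure.dirac_prod]
    rw [integrable_map_measure hGm.aestronglyMeasurable measurable_prodMk_left.aemeasurable]
    have : (G ∘ Prod.mk (0:ℝ)) = fun t =>
        Set.indicator ({0} : Set ℝ) (fun _ => c) t + Set.indicator (Icc a₂ b₂ \ {0}) g₂ t :=
      funext fun t => hG0t t
    rw [this]
    exact ia2.add ib2
  have i3 : Integrable G (volume.prod (Measure.dirac (0:ℝ))) := by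
    rw [Measure.prod_dirac]
    rw [integrable_map_measure hGm.aestronglyMeasurable measurable_prodMk_right.aemeasurable]
    have : (G ∘ fun x : ℝ => (x, (0:ℝ))) = fun x =>
        Set.indicator ({0} : Set ℝ) (fun _ => c) x + Set.indicator (Icc a₁ b₁ \ {0}) g₃ x :=
      funext fun x => hGx0 x
    rw [this]
    exact ia2.add ib3
  have i4 : Integrable G (volume.prod volume) := i4'.congr hGae.symm
  -- the four integral values
  have hv1 : ∫ y, G y ∂((Measure.dirac (0:ℝ)).prod (Measure.dirac (0:ℝ))) = c := by
    rw [Measure.dirac_prod_dirac, integral_dirac]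
    simp [hG, hS₁def, hS₂def, hS₃def, hS₄def, Set.indicator_apply]
  have hv2 : ∫ y, G y ∂((Measure.dirac (0:ℝ)).prod volume) = ∫ t in Icc a₂ b₂, g₂ t := by
    rw [Measure.dirac_prod,
      integral_map measurable_prodMk_left.aemeasurable hGm.aestronglyMeasurable]
    simp only [hG0t]
    rw [integral_add ia2 ib2, integral_eq_zero_of_ae (indicator_null_ae Real.volume_singleton _),
      integral_indicator (measurableSet_Icc.diff (measurableSet_singleton 0)),
      setIntegral_congr_set (diff_ae_eq_self.2
        (measure_mono_null inter_subset_right Real.volume_singleton))]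
    ring
  have hv3 : ∫ y, G y ∂(volume.prod (Measure.dirac (0:ℝ))) = ∫ x in Icc a₁ b₁, g₃ x := by
    rw [Measure.prod_dirac,
      integral_map measurable_prodMk_right.aemeasurable hGm.aestronglyMeasurable]
    simp only [hGx0]
    rw [integral_add ia2 ib3, integral_eq_zero_of_ae (indicator_null_ae Real.volume_singleton _),
      integral_indicator (measurableSet_Icc.diff (measurableSet_singleton 0)),
      setIntegral_congr_set (diff_ae_eq_self.2
        (measure_mono_null inter_subset_right Real.volume_singleton))]
    ring
  have hv4 : ∫ y, G y ∂(volume.prod volume)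
      = ∫ x in Icc a₁ b₁, ∫ y in Icc a₂ b₂, g₄ (x, y) := by
    rw [integral_congr_ae hGae, integral_indicator (measurableSet_Icc.prod measurableSet_Icc),
      ← Measure.prod_restrict]
    exact integral_prod g₄ (integrableOn_rect hg₄ a₁ b₁ a₂ b₂)
  show ∫ y, G y ∂muZI = _
  unfold muZI
  rw [integral_add_measure (integrable_add_measure.2 ⟨integrable_add_measure.2 ⟨i1, i2⟩, i3⟩) i4,
    integral_add_measure (integrable_add_measure.2 ⟨i1, i2⟩) i3,
    integral_add_measure i1 i2, hv1, hv2, hv3, hv4]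

/-! ### The two instantiations -/

lemma continuous_stdG : Continuous stdG := by
  unfold stdG gaussianPDFReal
  fun_prop

lemma continuous_phi01 {s : ℝ} (hs : s ∈ OO) (a₁ b₁ : ℝ) :
    Continuous (fun t => phi01 a₁ b₁ s t) := by
  have : (fun t => phi01 a₁ b₁ s t) = fun t => stdG t - Uk a₁ b₁ 0 s t :=
    funext fun t => phi01_eq hs a₁ b₁ t
  rw [this]
  exact continuous_stdG.sub (continuous_U_fixed a₁ b₁ s 0)

lemma continuous_phi10 {s : ℝ} (hs : s ∈ OO) (a₂ b₂ : ℝ) :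
    Continuous (fun x => phi10 a₂ b₂ s x) := by
  have : (fun x => phi10 a₂ b₂ s x) = fun x => stdG x - Tk a₂ b₂ 0 s x :=
    funext fun x => phi10_eq hs a₂ b₂ x
  rw [this]
  exact continuous_stdG.sub (continuous_T_fixed a₂ b₂ s 0)

lemma integral_ZIL_one {s : ℝ} (hs : s ∈ OO) (a₁ b₁ a₂ b₂ : ℝ) :
    ∫ y, ZIL a₁ b₁ a₂ b₂ s y ∂muZI = 1 := by
  have h := integral_muZI_form a₁ b₁ a₂ b₂ (phi00 a₁ b₁ a₂ b₂ s)
    (fun t => phi01 a₁ b₁ s t) (fun x => phi10 a₂ b₂ s x) (fun y => bivGauss s y.1 y.2)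
    (continuous_phi01 hs a₁ b₁) (continuous_phi10 hs a₂ b₂) (continuous_bivGauss_fixed s)
  rw [show (∫ y, ZIL a₁ b₁ a₂ b₂ s y ∂muZI) = _ from h]
  have e2 : (∫ t in Icc a₂ b₂, phi01 a₁ b₁ s t)
      = (∫ y in Icc a₂ b₂, stdG y) - DDk a₁ b₁ a₂ b₂ 0 s := by
    rw [setIntegral_congr_fun measurableSet_Icc (fun t _ => phi01_eq hs a₁ b₁ t),
      integral_sub (integrable_stdG.restrict)
        (((continuous_U_fixed a₁ b₁ s 0).continuousOn.integrableOn_compact isCompact_Icc)),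
      swap_UT a₁ b₁ a₂ b₂ 0]
  have e3 : (∫ x in Icc a₁ b₁, phi10 a₂ b₂ s x)
      = (∫ x in Icc a₁ b₁, stdG x) - DDk a₁ b₁ a₂ b₂ 0 s := by
    rw [setIntegral_congr_fun measurableSet_Icc (fun x _ => phi10_eq hs a₂ b₂ x),
      integral_sub (integrable_stdG.restrict)
        (((continuous_T_fixed a₂ b₂ s 0).continuousOn.integrableOn_compact isCompact_Icc))]
    rfl
  have e4 : (∫ x in Icc a₁ b₁, ∫ y in Icc a₂ b₂, (fun y : ℝ×ℝ => bivGauss s y.1 y.2) (x, y))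
      = DDk a₁ b₁ a₂ b₂ 0 s := rfl
  rw [phi00_eq hs a₁ b₁ a₂ b₂, e2, e3, e4]
  have hsplit := integral_add_compl (measurableSet_Icc (a := a₁) (b := b₁)) integrable_stdG
  have h1 : (∫ x in Icc a₁ b₁, stdG x) + (∫ x in (Icc a₁ b₁)ᶜ, stdG x) = 1 := by
    rw [hsplit, integral_stdG]
  linarith

/-! ### Iterated derivative of `ZIL` pointwise -/

lemma iter_ZIL_eq {l : ℕ} (hl : 1 ≤ l) (hl3 : l ≤ 3) {σ : ℝ} (hσ : σ ∈ OO)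
    (a₁ b₁ a₂ b₂ : ℝ) (y : ℝ×ℝ) :
    iteratedDeriv l (fun s => ZIL a₁ b₁ a₂ b₂ s y) σ =
      Set.indicator {y : ℝ×ℝ | y.1 = 0 ∧ y.2 = 0} (fun _ => DDk a₁ b₁ a₂ b₂ l σ) y
      + Set.indicator {y : ℝ×ℝ | y.1 = 0 ∧ (y.2 ∈ Icc a₂ b₂ ∧ y.2 ≠ 0)}
          (fun y => -(Uk a₁ b₁ l σ y.2)) y
      + Set.indicator {y : ℝ×ℝ | (y.1 ∈ Icc a₁ b₁ ∧ y.1 ≠ 0) ∧ y.2 = 0}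
          (fun y => -(Tk a₂ b₂ l σ y.1)) y
      + Set.indicator {y : ℝ×ℝ | (y.1 ∈ Icc a₁ b₁ ∧ y.1 ≠ 0) ∧ (y.2 ∈ Icc a₂ b₂ ∧ y.2 ≠ 0)}
          (fun y => B l σ y.1 y.2) y := by
  set fDD : ℕ → ℝ → ℝ := fun k => match k with
    | 0 => fun s => (∫ x in (Icc a₁ b₁)ᶜ, stdG x) - (∫ y in Icc a₂ b₂, stdG y)
        + DDk a₁ b₁ a₂ b₂ 0 s
    | (m+1) => fun s => DDk a₁ b₁ a₂ b₂ (m+1) s with hfDD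
  set fU : ℝ → ℕ → ℝ → ℝ := fun t k => match k with
    | 0 => fun s => stdG t - Uk a₁ b₁ 0 s t
    | (m+1) => fun s => -(Uk a₁ b₁ (m+1) s t) with hfU
  set fT : ℝ → ℕ → ℝ → ℝ := fun x k => match k with
    | 0 => fun s => stdG x - Tk a₂ b₂ 0 s x
    | (m+1) => fun s => -(Tk a₂ b₂ (m+1) s x) with hfT
  set F : ℕ → ℝ → ℝ := fun k s =>
    Set.indicator {y : ℝ×ℝ | y.1 = 0 ∧ y.2 = 0} (fun _ => fDD k s) y
    + Set.indicator {y : ℝ×ℝ | y.1 = 0 ∧ (y.2 ∈ Icc a₂ b₂ ∧ y.2 ≠ 0)}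
        (fun y => fU y.2 k s) y
    + Set.indicator {y : ℝ×ℝ | (y.1 ∈ Icc a₁ b₁ ∧ y.1 ≠ 0) ∧ y.2 = 0}
        (fun y => fT y.1 k s) y
    + Set.indicator {y : ℝ×ℝ | (y.1 ∈ Icc a₁ b₁ ∧ y.1 ≠ 0) ∧ (y.2 ∈ Icc a₂ b₂ ∧ y.2 ≠ 0)}
        (fun y => B k s y.1 y.2) y with hF
  have indDeriv : ∀ (S : Set (ℝ×ℝ)) (g g' : ℝ×ℝ → ℝ → ℝ) (s : ℝ),
      (∀ z, z ∈ S → HasDerivAt (g z) (g' z s) s) →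
      HasDerivAt (fun s => S.indicator (fun z => g z s) y) (S.indicator (fun z => g' z s) y) s := by
    intro S g g' s hg
    by_cases hy : y ∈ S
    · simpa [Set.indicator_of_mem hy] using hg y hy
    · simpa [Set.indicator_of_notMem hy] using hasDerivAt_const s (0:ℝ)
  have hchain : ∀ k < 3, ∀ s ∈ OO, HasDerivAt (F k) (F (k+1) s) s := by
    intro k hk s hs
    have hk2 : k ≤ 2 := Nat.lt_succ_iff.mp hk
    apply HasDerivAt.add
    apply HasDerivAt.add
    apply HasDerivAt.add
    · apply indDeriv _ (fun _ => fDD k) (fun _ => fDD (k+1)) s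
      intro z _
      match k with
      | 0 => exact ((hasDerivAt_const s ((∫ x in (Icc a₁ b₁)ᶜ, stdG x) -
          ∫ y in Icc a₂ b₂, stdG y)).add (hasDerivAt_DD (k := 0) (by norm_num) hs)).congr_deriv (zero_add _)
      | 1 => exact hasDerivAt_DD (by norm_num) hs
      | 2 => exact hasDerivAt_DD (by norm_num) hs
    · apply indDeriv _ (fun z => fU z.2 k) (fun z => fU z.2 (k+1)) s
      intro z _
      match k with
      | 0 => exact (hasDerivAt_U (by norm_num) hs z.2).const_sub (stdG z.2)
      | 1 => exact (hasDerivAt_U (by norm_num) hs z.2).neg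
      | 2 => exact (hasDerivAt_U (by norm_num) hs z.2).neg
    · apply indDeriv _ (fun z => fT z.1 k) (fun z => fT z.1 (k+1)) s
      intro z _
      match k with
      | 0 => exact (hasDerivAt_T (by norm_num) hs z.1).const_sub (stdG z.1)
      | 1 => exact (hasDerivAt_T (by norm_num) hs z.1).neg
      | 2 => exact (hasDerivAt_T (by norm_num) hs z.1).neg
    · apply indDeriv _ (fun z s => B k s z.1 z.2) (fun z s => B (k+1) s z.1 z.2) s
      intro z _
      exact hasDerivAt_B hk2 hs z.1 z.2
  have hloc : ∀ s ∈ OO, ZIL a₁ b₁ a₂ b₂ s y = F 0 s := by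
    intro s hs
    have e1 : phi00 a₁ b₁ a₂ b₂ s = fDD 0 s := phi00_eq hs a₁ b₁ a₂ b₂
    have e2 : ∀ t, phi01 a₁ b₁ s t = fU t 0 s := fun t => phi01_eq hs a₁ b₁ t
    have e3 : ∀ x, phi10 a₂ b₂ s x = fT x 0 s := fun x => phi10_eq hs a₂ b₂ x
    unfold ZIL
    rw [hF]
    simp only [e1, e2, e3]
    rfl
  have h1 : iteratedDeriv l (fun s => ZIL a₁ b₁ a₂ b₂ s y) σ = iteratedDeriv l (F 0) σ :=
    iteratedDeriv_congr_on isOpen_Ioo (fun s hs => hloc s hs) l σ hσ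
  rw [h1, iteratedDeriv_chain' F isOpen_Ioo 3 hchain l hl3 σ hσ]
  match l, hl with
  | 1, _ => rfl
  | 2, _ => rfl
  | 3, _ => rfl

lemma integral_iter_ZIL_zero {l : ℕ} (hl : 1 ≤ l) (hl3 : l ≤ 3) {σ : ℝ} (hσ : σ ∈ OO)
    (a₁ b₁ a₂ b₂ : ℝ) :
    ∫ y, iteratedDeriv l (fun s => ZIL a₁ b₁ a₂ b₂ s y) σ ∂muZI = 0 := by
  have hrw : (fun y => iteratedDeriv l (fun s => ZIL a₁ b₁ a₂ b₂ s y) σ) = fun y =>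
      Set.indicator {y : ℝ×ℝ | y.1 = 0 ∧ y.2 = 0} (fun _ => DDk a₁ b₁ a₂ b₂ l σ) y
      + Set.indicator {y : ℝ×ℝ | y.1 = 0 ∧ (y.2 ∈ Icc a₂ b₂ ∧ y.2 ≠ 0)}
          (fun y => -(Uk a₁ b₁ l σ y.2)) y
      + Set.indicator {y : ℝ×ℝ | (y.1 ∈ Icc a₁ b₁ ∧ y.1 ≠ 0) ∧ y.2 = 0}
          (fun y => -(Tk a₂ b₂ l σ y.1)) y
      + Set.indicator {y : ℝ×ℝ | (y.1 ∈ Icc a₁ b₁ ∧ y.1 ≠ 0) ∧ (y.2 ∈ Icc a₂ b₂ ∧ y.2 ≠ 0)}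
          (fun y => B l σ y.1 y.2) y :=
    funext (iter_ZIL_eq hl hl3 hσ a₁ b₁ a₂ b₂)
  rw [hrw, integral_muZI_form a₁ b₁ a₂ b₂ (DDk a₁ b₁ a₂ b₂ l σ)
    (fun t => -(Uk a₁ b₁ l σ t)) (fun x => -(Tk a₂ b₂ l σ x)) (fun p => B l σ p.1 p.2)
    ((continuous_U_fixed a₁ b₁ σ l).neg) ((continuous_T_fixed a₂ b₂ σ l).neg)
    (continuous_B_fixed l σ)]
  have e2 : (∫ t in Icc a₂ b₂, -(Uk a₁ b₁ l σ t)) = -(DDk a₁ b₁ a₂ b₂ l σ) := by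
    rw [integral_neg, swap_UT a₁ b₁ a₂ b₂ l]
  have e3 : (∫ x in Icc a₁ b₁, -(Tk a₂ b₂ l σ x)) = -(DDk a₁ b₁ a₂ b₂ l σ) := by
    rw [integral_neg]
    rfl
  have e4 : (∫ x in Icc a₁ b₁, ∫ y in Icc a₂ b₂, (fun p : ℝ×ℝ => B l σ p.1 p.2) (x, y))
      = DDk a₁ b₁ a₂ b₂ l σ := rfl
  rw [e2, e3, e4]
  ring

theorem stmt6 (δ a₁ b₁ a₂ b₂ : ℝ) (hδ : δ ∈ Ioo (0 : ℝ) 1)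
    (h₁ : a₁ < b₁) (h₂ : a₂ < b₂) :
    ∀ σ ∈ Icc (-1 + δ) (1 - δ), ∀ l : ℕ, 1 ≤ l → l ≤ 3 →
      (∫ y, iteratedDeriv l (fun s => ZIL a₁ b₁ a₂ b₂ s y) σ ∂muZI =
        iteratedDeriv l (fun s => ∫ y, ZIL a₁ b₁ a₂ b₂ s y ∂muZI) σ) ∧
      iteratedDeriv l (fun s => ∫ y, ZIL a₁ b₁ a₂ b₂ s y ∂muZI) σ = 0 := by
  intro σ hσ l hl1 hl3
  have hσO : σ ∈ OO := ⟨by linarith [hσ.1, hδ.1], by linarith [hσ.2, hδ.1]⟩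
  have hRHS : iteratedDeriv l (fun s => ∫ y, ZIL a₁ b₁ a₂ b₂ s y ∂muZI) σ = 0 := by
    have hcongr := iteratedDeriv_congr_on (f := fun s => ∫ y, ZIL a₁ b₁ a₂ b₂ s y ∂muZI)
      (g := fun _ => (1:ℝ)) isOpen_Ioo (fun s hs => integral_ZIL_one hs a₁ b₁ a₂ b₂) l σ hσO
    rw [hcongr, iteratedDeriv_one_fun hl1]
  exact ⟨by rw [integral_iter_ZIL_zero hl1 hl3 hσO a₁ b₁ a₂ b₂, hRHS], hRHS⟩
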